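/- Let (X,r) be a finite non-degenerate solution of the set-theoretic Yang–Baxter equation. If the Lie algebra 𝔤(X,r) ⊆ 𝔤𝔩(V) generated by the operators {L_{[x]} ∘ p_{[y]}, R_{[x]} ∘ p_{[y]}} is abelian, then the retraction Ret(X,r) is the trivial (flip) solution, i.e., the induced left and right actions on X/∼ are trivial. -/

import Mathlib

/-- `r × id` on `X × X × X`. -/
def r1 {X : Type*} (r : X × X → X × X) : X × X × X → X × X × X :=
  fun p => ((r (p.1, p.2.1)).1, (r (p.1, p.2.1)).2, p.2.2)

/-- `id × r` on `X × X × X`. -/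
def r2 {X : Type*} (r : X × X → X × X) : X × X × X → X × X × X :=
  fun p => (p.1, r (p.2.1, p.2.2))

/-- The set-theoretic Yang–Baxter (braid) equation. -/
def IsYBE {X : Type*} (r : X × X → X × X) : Prop :=
  r1 r ∘ r2 r ∘ r1 r = r2 r ∘ r1 r ∘ r2 r

/-- Left translation `L_x`. -/
def Lmap {X : Type*} (r : X × X → X × X) (x y : X) : X := (r (x, y)).1

/-- Right translation `R_y`. -/
def Rmap {X : Type*} (r : X × X → X × X) (y x : X) : X := (r (x, y)).2

/-- The retract setoid: `x ∼ y` iff `L_x = L_y` and `R_x = R_y`. -/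
def retSetoid {X : Type*} (r : X × X → X × X) : Setoid X :=
  ⟨fun a b => Lmap r a = Lmap r b ∧ Rmap r a = Rmap r b,
    ⟨fun _ => ⟨rfl, rfl⟩, fun h => ⟨h.1.symm, h.2.symm⟩,
      fun h h' => ⟨h.1.trans h'.1, h.2.trans h'.2⟩⟩⟩

/-- The linear extension of `L_x` to `V = ℂ^X`, sending `e_y ↦ e_{L_x y}`. -/
noncomputable def Lop {X : Type*} (r : X × X → X × X) (x : X) :
    (X →₀ ℂ) →ₗ[ℂ] (X →₀ ℂ) :=
  Finsupp.lmapDomain ℂ ℂ (Lmap r x)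

/-- The linear extension of `R_y` to `V = ℂ^X`, sending `e_x ↦ e_{R_y x}`. -/
noncomputable def Rop {X : Type*} (r : X × X → X × X) (y : X) :
    (X →₀ ℂ) →ₗ[ℂ] (X →₀ ℂ) :=
  Finsupp.lmapDomain ℂ ℂ (Rmap r y)

open Classical in
/-- The projection onto the span of the `∼`-class of `z`. -/
noncomputable def pcl {X : Type*} [Fintype X] (r : X × X → X × X) (z : X) :
    (X →₀ ℂ) →ₗ[ℂ] (X →₀ ℂ) :=
  ∑ w : X, if (retSetoid r).r w z then Finsupp.lsingle w ∘ₗ Finsupp.lapply w else 0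

/-- Generators of the Lie algebra `𝔤(X,r)`: the operators
`L_{[x]} ∘ p_{[y]}` and `R_{[x]} ∘ p_{[y]}`. -/
def lieGens {X : Type*} [Fintype X] (r : X × X → X × X) :
    Set (Module.End ℂ (X →₀ ℂ)) :=
  {T | ∃ x y : X, T = Lop r x ∘ₗ pcl r y ∨ T = Rop r x ∘ₗ pcl r y}

attribute [local instance 100] LieRing.ofAssociativeRing

open Classical in
lemma pcl_single {X : Type*} [Fintype X] (r : X × X → X × X) (z w : X) :
    pcl r z (Finsupp.single w 1) =
      if (retSetoid r).r w z then Finsupp.single w (1:ℂ) else 0 := by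
  rw [pcl, LinearMap.sum_apply]
  rw [Finset.sum_eq_single w]
  · by_cases hw : (retSetoid r).r w z <;> simp [hw]
  · intro b _ hb
    by_cases hb' : (retSetoid r).r b z <;> simp [hb', Finsupp.single_apply, Ne.symm hb]
  · simp

lemma Lop_single {X : Type*} (r : X × X → X × X) (x w : X) :
    Lop r x (Finsupp.single w 1) = Finsupp.single (Lmap r x w) (1:ℂ) := by
  simp [Lop, Finsupp.mapDomain_single]

lemma Rop_single {X : Type*} (r : X × X → X × X) (y w : X) :
    Rop r y (Finsupp.single w 1) = Finsupp.single (Rmap r y w) (1:ℂ) := by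
  simp [Rop, Finsupp.mapDomain_single]

set_option maxHeartbeats 1000000 in
set_option synthInstance.maxHeartbeats 400000 in
theorem stmt14 {X : Type*} [Fintype X] (r : X × X → X × X) (h : IsYBE r)
    (hL : ∀ x : X, Function.Bijective (Lmap r x))
    (hR : ∀ y : X, Function.Bijective (Rmap r y))
    (habelian : IsLieAbelian
      (LieSubalgebra.lieSpan ℂ (Module.End ℂ (X →₀ ℂ)) (lieGens r))) :
    ∀ x y : X, (retSetoid r).r (Lmap r x y) y ∧ (retSetoid r).r (Rmap r y x) x := by
  have hcomm : ∀ A B : Module.End ℂ (X →₀ ℂ), A ∈ lieGens r → B ∈ lieGens r →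
      A * B = B * A := by
    intro A B hA hB
    set S := LieSubalgebra.lieSpan ℂ (Module.End ℂ (X →₀ ℂ)) (lieGens r) with hS
    have h0 : ⁅(⟨A, LieSubalgebra.subset_lieSpan hA⟩ : S),
        (⟨B, LieSubalgebra.subset_lieSpan hB⟩ : S)⁆ = 0 := trivial_lie_zero _ _ _ _
    have h2 := congrArg Subtype.val h0
    rw [LieSubalgebra.coe_bracket] at h2
    rw [Ring.lie_def] at h2
    exact sub_eq_zero.mp h2
  intro x y
  constructor
  · by_contra hc
    have hc' : ¬ (retSetoid r).r y (Lmap r x y) := fun hh => hc ((retSetoid r).symm hh)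
    have hA : (Lop r x ∘ₗ pcl r y) ∈ lieGens r := ⟨x, y, Or.inl rfl⟩
    have hB : (Lop r x ∘ₗ pcl r (Lmap r x y)) ∈ lieGens r := ⟨x, Lmap r x y, Or.inl rfl⟩
    have hq := congrArg (fun T : Module.End ℂ (X →₀ ℂ) => T (Finsupp.single y 1))
      (hcomm _ _ hA hB)
    simp only [Module.End.mul_apply, LinearMap.comp_apply] at hq
    have hl : pcl r (Lmap r x y) (Finsupp.single y 1) = 0 := by
      rw [pcl_single, if_neg hc']
    have h1 : pcl r y (Finsupp.single y 1) = Finsupp.single y 1 := by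
      rw [pcl_single]; exact if_pos ⟨rfl, rfl⟩
    have h2 : pcl r (Lmap r x y) (Finsupp.single (Lmap r x y) 1)
        = Finsupp.single (Lmap r x y) 1 := by
      rw [pcl_single]; exact if_pos ⟨rfl, rfl⟩
    rw [hl, map_zero, map_zero, map_zero, h1, Lop_single, h2, Lop_single] at hq
    exact one_ne_zero (Finsupp.single_eq_zero.mp hq.symm)
  · by_contra hc
    have hc' : ¬ (retSetoid r).r x (Rmap r y x) := fun hh => hc ((retSetoid r).symm hh)
    have hA : (Rop r y ∘ₗ pcl r x) ∈ lieGens r := ⟨y, x, Or.inr rfl⟩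
    have hB : (Rop r y ∘ₗ pcl r (Rmap r y x)) ∈ lieGens r := ⟨y, Rmap r y x, Or.inr rfl⟩
    have hq := congrArg (fun T : Module.End ℂ (X →₀ ℂ) => T (Finsupp.single x 1))
      (hcomm _ _ hA hB)
    simp only [Module.End.mul_apply, LinearMap.comp_apply] at hq
    have hl : pcl r (Rmap r y x) (Finsupp.single x 1) = 0 := by
      rw [pcl_single, if_neg hc']
    have h1 : pcl r x (Finsupp.single x 1) = Finsupp.single x 1 := by
      rw [pcl_single]; exact if_pos ⟨rfl, rfl⟩
    have h2 : pcl r (Rmap r y x) (Finsupp.single (Rmap r y x) 1)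
        = Finsupp.single (Rmap r y x) 1 := by
      rw [pcl_single]; exact if_pos ⟨rfl, rfl⟩
    rw [hl, map_zero, map_zero, map_zero, h1, Rop_single, h2, Rop_single] at hq
    exact one_ne_zero (Finsupp.single_eq_zero.mp hq.symm)
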